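/- Two-threshold lemma: Let F be the multilinear extension of a submodular function f : 2^X → ℝ₊, let X = X₁ ∪ X₂ be a partition, and let λ₁, λ₂ be independent uniform random variables in [0,1]. Then for any x ∈ [0,1]^X, F(x) ≥ E[f((T_{>λ₁}(x) ∩ X₁) ∪ (T_{>λ₂}(x) ∩ X₂))], where T_{>λ}(x) = {i : x_i > λ}. -/

import Mathlib

open MeasureTheory

def Submodular {X : Type*} [DecidableEq X] (f : Finset X → ℝ) : Prop :=
  ∀ S T : Finset X, f (S ∪ T) + f (S ∩ T) ≤ f S + f T

/-- The multilinear extension of a set function. -/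
def mExt {X : Type*} [Fintype X] [DecidableEq X] (f : Finset X → ℝ) (x : X → ℝ) : ℝ :=
  ∑ S : Finset X, f S * ((∏ i ∈ S, x i) * ∏ j ∈ Sᶜ, (1 - x j))

section Aux
open Finset Function

set_option linter.unusedVariables false

set_option linter.unusedSectionVars false

variable {X : Type*} [Fintype X] [DecidableEq X]

def mcoeff (E : Finset X) (x : X → ℝ) (S : Finset X) : ℝ :=
  (∏ i ∈ S, x i) * ∏ j ∈ E \ S, (1 - x j)

def mE (f : Finset X → ℝ) (E : Finset X) (x : X → ℝ) : ℝ :=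
  ∑ S ∈ E.powerset, f S * mcoeff E x S

lemma mExt_eq_mE (f : Finset X → ℝ) (x : X → ℝ) : mExt f x = mE f Finset.univ x := by
  simp [mExt, mE, mcoeff, Finset.powerset_univ, Finset.compl_eq_univ_sdiff]

lemma mcoeff_nonneg {E : Finset X} {x : X → ℝ} (hx : ∀ i, x i ∈ Set.Icc (0:ℝ) 1) (S : Finset X) :
    0 ≤ mcoeff E x S := by
  apply mul_nonneg
  · exact Finset.prod_nonneg fun i _ => (hx i).1
  · exact Finset.prod_nonneg fun i _ => by linarith [(hx i).2]

lemma mE_congr (f : Finset X → ℝ) {E : Finset X} {x y : X → ℝ}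
    (h : ∀ i ∈ E, x i = y i) : mE f E x = mE f E y := by
  refine Finset.sum_congr rfl fun S hS => ?_
  rw [Finset.mem_powerset] at hS
  unfold mcoeff
  congr 1
  congr 1
  · exact Finset.prod_congr rfl fun i hi => h i (hS hi)
  · exact Finset.prod_congr rfl fun j hj => by rw [h j (Finset.mem_sdiff.1 hj).1]

lemma mE_insert (f : Finset X → ℝ) {E : Finset X} {a : X} (ha : a ∉ E) (x : X → ℝ) :
    mE f (insert a E) x
      = (1 - x a) * mE f E x + x a * mE (fun S => f (insert a S)) E x := by
  unfold mE
  rw [Finset.sum_powerset_insert ha]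
  rw [Finset.mul_sum, Finset.mul_sum]
  congr 1
  · refine Finset.sum_congr rfl fun S hS => ?_
    rw [Finset.mem_powerset] at hS
    have haS : a ∉ S := fun h => ha (hS h)
    have h1 : (insert a E) \ S = insert a (E \ S) := by
      rw [Finset.insert_sdiff_of_notMem _ haS]
    rw [mcoeff, mcoeff, h1, Finset.prod_insert (by simp [ha])]
    ring
  · refine Finset.sum_congr rfl fun S hS => ?_
    rw [Finset.mem_powerset] at hS
    have haS : a ∉ S := fun h => ha (hS h)
    have h1 : (insert a E) \ (insert a S) = E \ S := by
      ext i
      simp only [Finset.mem_sdiff, Finset.mem_insert]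
      constructor
      · rintro ⟨h1 | h1, h2⟩
        · exact absurd (Or.inl h1) h2
        · exact ⟨h1, fun h => h2 (Or.inr h)⟩
      · rintro ⟨h1, h2⟩
        exact ⟨Or.inr h1, by rintro (rfl | h) <;> [exact ha h1; exact h2 h]⟩
    rw [mcoeff, mcoeff, h1, Finset.prod_insert haS]
    ring

lemma mE_update (f : Finset X → ℝ) {E : Finset X} {j : X} (hj : j ∈ E) (x : X → ℝ) (d : ℝ) :
    mE f E (Function.update x j d)
      = (1 - d) * mE f (E.erase j) x + d * mE (fun S => f (insert j S)) (E.erase j) x := by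
  conv_lhs => rw [← Finset.insert_erase hj]
  rw [mE_insert _ (Finset.notMem_erase j E), Function.update_self]
  rw [mE_congr f (x := Function.update x j d) (y := x)
      (fun i hi => Function.update_of_ne (Finset.ne_of_mem_erase hi) _ _),
    mE_congr (fun S => f (insert j S)) (x := Function.update x j d) (y := x)
      (fun i hi => Function.update_of_ne (Finset.ne_of_mem_erase hi) _ _)]

lemma mExt_update (f : Finset X → ℝ) (x : X → ℝ) (a : X) (c : ℝ) :
    mExt f (Function.update x a c)
      = (1 - c) * mE f (Finset.univ.erase a) x
        + c * mE (fun S => f (insert a S)) (Finset.univ.erase a) x := by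
  rw [mExt_eq_mE, mE_update f (Finset.mem_univ a)]

lemma mExt_decomp (f : Finset X → ℝ) (x : X → ℝ) (a : X) :
    mExt f x = (1 - x a) * mExt f (Function.update x a 0)
      + x a * mExt f (Function.update x a 1) := by
  have h0 := mExt_update f x a 0
  have h1 := mExt_update f x a 1
  have hs := mExt_update f x a (x a)
  rw [Function.update_eq_self] at hs
  rw [hs, h0, h1]; ring

lemma mExt_update_affine (f : Finset X → ℝ) (x : X → ℝ) (a : X) (c : ℝ) :
    mExt f (Function.update x a c)
      = (1 - c) * mExt f (Function.update x a 0) + c * mExt f (Function.update x a 1) := by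
  have h0 := mExt_update f x a 0
  have h1 := mExt_update f x a 1
  rw [mExt_update f x a c, h0, h1]; ring

lemma mExt_vertex (f : Finset X → ℝ) (A : Finset X) :
    mExt f (fun i => if i ∈ A then (1:ℝ) else 0) = f A := by
  unfold mExt
  rw [Finset.sum_eq_single A]
  · rw [Finset.prod_eq_one (fun i hi => if_pos hi),
      Finset.prod_eq_one (fun i hi => by simp [Finset.mem_compl.1 hi])]
    ring
  · intro S _ hSA
    have : ∃ i, (i ∈ S ∧ i ∉ A) ∨ (i ∈ A ∧ i ∉ S) := by
      by_contra hc
      push_neg at hc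
      exact hSA (Finset.ext fun i => ⟨fun h => (hc i).1 h, fun h => (hc i).2 h⟩)
    obtain ⟨i, ⟨hiS, hiA⟩ | ⟨hiA, hiS⟩⟩ := this
    · rw [Finset.prod_eq_zero hiS (by simp [hiA])]; ring
    · rw [Finset.prod_eq_zero (Finset.mem_compl.2 hiS) (i := i) (by simp [hiA])]; ring
  · simp

lemma second_diff {f : Finset X → ℝ} (hf : Submodular f) {x : X → ℝ}
    (hx : ∀ i, x i ∈ Set.Icc (0:ℝ) 1) {a j : X} (haj : a ≠ j) :
    mExt f (Function.update (Function.update x j 1) a 1)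
      + mExt f (Function.update (Function.update x j 0) a 0)
    ≤ mExt f (Function.update (Function.update x j 1) a 0)
      + mExt f (Function.update (Function.update x j 0) a 1) := by
  have hjE : j ∈ Finset.univ.erase a := Finset.mem_erase.2 ⟨fun h => haj h.symm, Finset.mem_univ j⟩
  have expand : ∀ (g : Finset X → ℝ) (d : ℝ), mE g (Finset.univ.erase a) (Function.update x j d)
      = (1 - d) * mE g ((Finset.univ.erase a).erase j) x
        + d * mE (fun S => g (insert j S)) ((Finset.univ.erase a).erase j) x :=
    fun g d => mE_update g hjE x d
  have key : ∀ (c d : ℝ), mExt f (Function.update (Function.update x j d) a c)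
      = (1-c)*(1-d) * mE f ((Finset.univ.erase a).erase j) x
        + (1-c)*d * mE (fun S => f (insert j S)) ((Finset.univ.erase a).erase j) x
        + c*(1-d) * mE (fun S => f (insert a S)) ((Finset.univ.erase a).erase j) x
        + c*d * mE (fun S => f (insert a (insert j S))) ((Finset.univ.erase a).erase j) x := by
    intro c d
    rw [mExt_update, expand f d, expand (fun S => f (insert a S)) d]
    ring
  rw [key 1 1, key 0 0, key 0 1, key 1 0]
  ring_nf
  have : mE (fun S => f (insert a (insert j S))) ((Finset.univ.erase a).erase j) x
      + mE f ((Finset.univ.erase a).erase j) x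
    ≤ mE (fun S => f (insert j S)) ((Finset.univ.erase a).erase j) x
      + mE (fun S => f (insert a S)) ((Finset.univ.erase a).erase j) x := by
    unfold mE
    rw [← Finset.sum_add_distrib, ← Finset.sum_add_distrib]
    refine Finset.sum_le_sum fun S hS => ?_
    rw [Finset.mem_powerset] at hS
    have haS : a ∉ S := fun h => by simpa using (Finset.mem_erase.1 (Finset.mem_erase.1 (hS h)).2).1
    have hjS : j ∉ S := fun h => by simpa using (Finset.mem_erase.1 (hS h)).1
    have hsub := hf (insert a S) (insert j S)
    have hu : insert a S ∪ insert j S = insert a (insert j S) := by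
      ext i; simp [Finset.mem_union, Finset.mem_insert]; tauto
    have hi : insert a S ∩ insert j S = S := by
      ext i
      simp only [Finset.mem_inter, Finset.mem_insert]
      constructor
      · rintro ⟨h1 | h1, h2 | h2⟩
        · subst h1; exact absurd h2.symm (Ne.symm haj)
        · exact h2
        · exact h1
        · exact h1
      · exact fun h => ⟨Or.inr h, Or.inr h⟩
    rw [hu, hi] at hsub
    rw [← add_mul, ← add_mul]
    exact mul_le_mul_of_nonneg_right (by simp only []; linarith) (mcoeff_nonneg hx S)
  linarith

lemma marg_mono_pt {f : Finset X → ℝ} (hf : Submodular f) {x : X → ℝ}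
    (hx : ∀ i, x i ∈ Set.Icc (0:ℝ) 1) (a j : X) {e : ℝ} (he : e ≤ x j) :
    mExt f (Function.update x a 1) - mExt f (Function.update x a 0)
      ≤ mExt f (Function.update (Function.update x j e) a 1)
        - mExt f (Function.update (Function.update x j e) a 0) := by
  by_cases hja : j = a
  · subst hja
    rw [Function.update_idem, Function.update_idem]
  · have haj : a ≠ j := fun h => hja h.symm
    have key : ∀ c d : ℝ, mExt f (Function.update (Function.update x j d) a c)
        = (1-d) * mExt f (Function.update (Function.update x j 0) a c)
          + d * mExt f (Function.update (Function.update x j 1) a c) := by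
      intro c d
      rw [Function.update_comm hja, mExt_update_affine _ _ j d,
        Function.update_comm haj c (0:ℝ) x, Function.update_comm haj c (1:ℝ) x]
    have h0 := key 0 (x j)
    have h1 := key 1 (x j)
    rw [Function.update_eq_self] at h0 h1
    have h0' := key 0 e
    have h1' := key 1 e
    have hq := second_diff hf hx haj
    set q00 := mExt f (Function.update (Function.update x j 0) a 0)
    set q01 := mExt f (Function.update (Function.update x j 1) a 0)
    set q10 := mExt f (Function.update (Function.update x j 0) a 1)
    set q11 := mExt f (Function.update (Function.update x j 1) a 1)
    have hfac : (x j - e) * (q11 + q00 - q01 - q10) ≤ 0 :=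
      mul_nonpos_of_nonneg_of_nonpos (by linarith) (by linarith)
    nlinarith [hfac, h0, h1, h0', h1']

lemma marg_antitone {f : Finset X → ℝ} (hf : Submodular f) {w w' : X → ℝ}
    (hw : ∀ i, w i ∈ Set.Icc (0:ℝ) 1) (hw' : ∀ i, w' i ∈ Set.Icc (0:ℝ) 1)
    (hle : ∀ i, w' i ≤ w i) (a : X) :
    mExt f (Function.update w a 1) - mExt f (Function.update w a 0)
      ≤ mExt f (Function.update w' a 1) - mExt f (Function.update w' a 0) := by
  have main : ∀ E : Finset X,
      mExt f (Function.update w a 1) - mExt f (Function.update w a 0)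
        ≤ mExt f (Function.update (fun i => if i ∈ E then w' i else w i) a 1)
          - mExt f (Function.update (fun i => if i ∈ E then w' i else w i) a 0) := by
    intro E
    induction E using Finset.induction_on with
    | empty => simp
    | @insert j E hjE ih =>
      refine le_trans ih ?_
      set v := fun i => if i ∈ E then w' i else w i with hv
      have hvx : ∀ i, v i ∈ Set.Icc (0:ℝ) 1 := fun i => by
        by_cases h : i ∈ E <;> simp [hv, h, hw i, hw' i]
      have hnew : (fun i => if i ∈ insert j E then w' i else w i)
          = Function.update v j (w' j) := by
        funext i
        by_cases hij : i = j
        · subst hij; simp [hv]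
        · simp [Function.update_of_ne hij, hv, Finset.mem_insert, hij]
      rw [hnew]
      have hvj : v j = w j := if_neg hjE
      exact marg_mono_pt hf hvx a j (hvj ▸ hle j)
  have h := main Finset.univ
  simpa using h

lemma step_integrableOn (g : Finset X → ℝ) (x : X → ℝ) :
    IntegrableOn (fun t : ℝ => g (Finset.univ.filter fun i => t < x i))
      (Set.Icc (0:ℝ) 1) volume := by
  have hset : ∀ S : Finset X,
      MeasurableSet {u : ℝ | (Finset.univ.filter fun i => u < x i) = S} := by
    intro S
    have hrw : {u : ℝ | (Finset.univ.filter fun i => u < x i) = S}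
        = ⋂ i, (if i ∈ S then Set.Iio (x i) else Set.Ici (x i)) := by
      ext u
      simp only [Set.mem_setOf_eq, Set.mem_iInter, Finset.ext_iff, Finset.mem_filter,
        Finset.mem_univ, true_and]
      refine forall_congr' fun i => ?_
      by_cases hi : i ∈ S <;> simp [hi, not_lt, Set.mem_Iio, Set.mem_Ici]
    rw [hrw]
    exact MeasurableSet.iInter fun i => by
      by_cases hi : i ∈ S <;> simp [hi, measurableSet_Iio, measurableSet_Ici]
  have hrep : (fun t : ℝ => g (Finset.univ.filter fun i => t < x i))
      = fun t => ∑ S : Finset X,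
          Set.indicator {u : ℝ | (Finset.univ.filter fun i => u < x i) = S}
            (fun _ => g S) t := by
    funext t
    rw [Finset.sum_eq_single (Finset.univ.filter fun i => t < x i)]
    · rw [Set.indicator_of_mem (by simp [Set.mem_setOf_eq])]
    · intro S _ hS
      exact Set.indicator_of_notMem (fun h => hS (Set.mem_setOf_eq ▸ h).symm) _
    · intro h
      exact absurd (Finset.mem_univ _) h
  rw [hrep]
  exact integrable_finset_sum _ fun S _ =>
    ((integrableOn_const measure_Icc_lt_top.ne).indicator (hset S))

lemma key_base (f : Finset X → ℝ) (Y : Finset X) {x : X → ℝ}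
    (hbit : ∀ i ∈ Y, x i = 0 ∨ x i = 1) :
    ∫ t in Set.Icc (0:ℝ) 1,
        mExt f (fun i => if i ∈ Y then (if t < x i then (1:ℝ) else 0) else x i)
      = mExt f x := by
  rw [← setIntegral_congr_set Ico_ae_eq_Icc]
  rw [setIntegral_congr_fun (g := fun _ => mExt f x) measurableSet_Ico ?_]
  · simp [Real.volume_Ico]
  · intro t ht
    have h1 : (fun i => if i ∈ Y then (if t < x i then (1:ℝ) else 0) else x i) = x := by
      funext i
      by_cases hi : i ∈ Y
      · rcases hbit i hi with h | h
        · rw [if_pos hi, h, if_neg (not_lt.2 ht.1)]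
        · rw [if_pos hi, h, if_pos ht.2]
      · exact if_neg hi
    simp only [h1]

lemma key_aux {f : Finset X → ℝ} (hf : Submodular f) (Y : Finset X) :
    ∀ (n : ℕ) (x : X → ℝ), (∀ i, x i ∈ Set.Icc (0:ℝ) 1) →
      (Y.filter fun i => x i ≠ 0 ∧ x i ≠ 1).card ≤ n →
      ∫ t in Set.Icc (0:ℝ) 1,
          mExt f (fun i => if i ∈ Y then (if t < x i then (1:ℝ) else 0) else x i)
        ≤ mExt f x := by
  intro n
  induction n with
  | zero =>
    intro x hx hcard
    refine le_of_eq (key_base f Y fun i hi => ?_)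
    by_contra hc
    push_neg at hc
    have hmem : i ∈ Y.filter fun i => x i ≠ 0 ∧ x i ≠ 1 := Finset.mem_filter.2 ⟨hi, hc⟩
    rw [Finset.card_eq_zero.1 (Nat.le_zero.1 hcard)] at hmem
    exact absurd hmem (Finset.notMem_empty i)
  | succ n ih =>
    intro x hx hcard
    by_cases hemp : (Y.filter fun i => x i ≠ 0 ∧ x i ≠ 1) = ∅
    · refine le_of_eq (key_base f Y fun i hi => ?_)
      by_contra hc
      push_neg at hc
      have hmem : i ∈ Y.filter fun i => x i ≠ 0 ∧ x i ≠ 1 := Finset.mem_filter.2 ⟨hi, hc⟩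
      rw [hemp] at hmem
      exact absurd hmem (Finset.notMem_empty i)
    · obtain ⟨a, ha⟩ := Finset.nonempty_iff_ne_empty.2 hemp
      obtain ⟨haY, hxa0, hxa1⟩ :
          a ∈ Y ∧ x a ≠ 0 ∧ x a ≠ 1 := by
        have := Finset.mem_filter.1 ha
        exact ⟨this.1, this.2.1, this.2.2⟩
      set s : ℝ := x a with hs_def
      have hs0 : 0 < s := lt_of_le_of_ne (hx a).1 (Ne.symm hxa0)
      have hs1 : s < 1 := lt_of_le_of_ne (hx a).2 hxa1
      set v : ℝ → X → ℝ :=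
        fun t i => if i ∈ Y then (if t < x i then (1:ℝ) else 0) else x i with hv_def
      set m : ℝ → ℝ := fun t =>
        mExt f (Function.update (v t) a 1) - mExt f (Function.update (v t) a 0) with hm_def
      have hv01 : ∀ t i, v t i ∈ Set.Icc (0:ℝ) 1 := by
        intro t i
        by_cases hi : i ∈ Y
        · by_cases ht : t < x i <;> simp [hv_def, hi, ht]
        · simpa [hv_def, hi] using hx i
      have hvmono : ∀ {t t' : ℝ}, t ≤ t' → ∀ i, v t' i ≤ v t i := by
        intro t t' htt' i
        by_cases hi : i ∈ Y
        · by_cases ht : t < x i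
          · by_cases ht' : t' < x i <;> simp [hv_def, hi, ht, ht']
          · have : ¬ t' < x i := fun h => ht (lt_of_le_of_lt htt' h)
            simp [hv_def, hi, ht, this]
        · simp [hv_def, hi]
      have hmono : Monotone m := fun t t' htt' =>
        marg_antitone hf (hv01 t) (hv01 t') (hvmono htt') a
      -- pointwise identity
      have pid : ∀ t : ℝ, mExt f (v t)
          = mExt f (Function.update (v t) a 0) + (if t < s then m t else 0) := by
        intro t
        by_cases hts : t < s
        · have hvt : v t = Function.update (v t) a 1 := by
            funext i
            by_cases hia : i = a
            · subst hia; rw [Function.update_self]; simp [hv_def, haY, hts, ← hs_def]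
            · rw [Function.update_of_ne hia]
          rw [if_pos hts, hm_def]
          nth_rewrite 1 [hvt]
          ring
        · have hvt : v t = Function.update (v t) a 0 := by
            funext i
            by_cases hia : i = a
            · subst hia; rw [Function.update_self]; simp [hv_def, haY, hts, ← hs_def]
            · rw [Function.update_of_ne hia]
          rw [if_neg hts]
          nth_rewrite 1 [hvt]
          ring
      -- integrability via step representation
      set w : Finset X → X → ℝ :=
        fun S i => if i ∈ Y then (if i ∈ S then (1:ℝ) else 0) else x i with hw_def
      have hvw : ∀ t, v t = w (Finset.univ.filter fun i => t < x i) := by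
        intro t
        funext i
        by_cases hi : i ∈ Y <;> simp [hv_def, hw_def, hi]
      have I0 : IntegrableOn (fun t => mExt f (Function.update (v t) a 0))
          (Set.Icc (0:ℝ) 1) volume := by
        have : (fun t => mExt f (Function.update (v t) a 0))
            = fun t => (fun S => mExt f (Function.update (w S) a 0))
                (Finset.univ.filter fun i => t < x i) := by
          funext t; rw [hvw t]
        rw [this]
        exact step_integrableOn (fun S => mExt f (Function.update (w S) a 0)) x
      have Im : IntegrableOn m (Set.Icc (0:ℝ) 1) volume := by
        have : m = fun t => (fun S => mExt f (Function.update (w S) a 1)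
            - mExt f (Function.update (w S) a 0))
                (Finset.univ.filter fun i => t < x i) := by
          funext t; rw [hm_def]; simp only [hvw t]
        rw [this]
        exact step_integrableOn (fun S => mExt f (Function.update (w S) a 1)
            - mExt f (Function.update (w S) a 0)) x
      have Iif : IntegrableOn (fun t => if t < s then m t else 0)
          (Set.Icc (0:ℝ) 1) volume := by
        have : (fun t => if t < s then m t else 0)
            = fun t => (fun S => if a ∈ S then mExt f (Function.update (w S) a 1)
                - mExt f (Function.update (w S) a 0) else 0)
                (Finset.univ.filter fun i => t < x i) := by
          funext t
          have hmem : (a ∈ Finset.univ.filter fun i => t < x i) ↔ t < s := by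
            simp [hs_def]
          beta_reduce
          by_cases hts : t < s
          · rw [if_pos hts, if_pos (hmem.2 hts), hm_def]; simp only [hvw t]
          · rw [if_neg hts, if_neg (fun h => hts (hmem.1 h))]
        rw [this]
        exact step_integrableOn (fun S => if a ∈ S then mExt f (Function.update (w S) a 1)
            - mExt f (Function.update (w S) a 0) else 0) x
      -- split the goal integral
      show (∫ t in Set.Icc (0:ℝ) 1, mExt f (v t)) ≤ mExt f x
      have hsplit : (∫ t in Set.Icc (0:ℝ) 1, mExt f (v t))
          = (∫ t in Set.Icc (0:ℝ) 1, mExt f (Function.update (v t) a 0))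
            + ∫ t in Set.Icc (0:ℝ) 1, (if t < s then m t else 0) := by
        rw [← integral_add I0 Iif]
        exact integral_congr_ae (Filter.Eventually.of_forall fun t => pid t)
      -- induction hypothesis at x[a := 0]
      have hx0 : ∀ i, Function.update x a 0 i ∈ Set.Icc (0:ℝ) 1 := by
        intro i
        by_cases h : i = a
        · subst h; rw [Function.update_self]; exact ⟨le_refl 0, zero_le_one⟩
        · rw [Function.update_of_ne h]; exact hx i
      have hx1 : ∀ i, Function.update x a 1 i ∈ Set.Icc (0:ℝ) 1 := by
        intro i
        by_cases h : i = a
        · subst h; rw [Function.update_self]; exact ⟨zero_le_one, le_refl 1⟩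
        · rw [Function.update_of_ne h]; exact hx i
      have hfilter : ∀ c : ℝ, c = 0 ∨ c = 1 →
          (Y.filter fun i => Function.update x a c i ≠ 0 ∧ Function.update x a c i ≠ 1)
            = (Y.filter fun i => x i ≠ 0 ∧ x i ≠ 1).erase a := by
        intro c hc
        ext i
        simp only [Finset.mem_filter, Finset.mem_erase]
        constructor
        · rintro ⟨hiY, h0, h1⟩
          have hia : i ≠ a := by
            rintro rfl
            rw [Function.update_self] at h0 h1
            rcases hc with rfl | rfl
            · exact h0 rfl
            · exact h1 rfl
          rw [Function.update_of_ne hia] at h0 h1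
          exact ⟨hia, hiY, h0, h1⟩
        · rintro ⟨hia, hiY, h0, h1⟩
          refine ⟨hiY, ?_, ?_⟩ <;> rw [Function.update_of_ne hia] <;> assumption
      have hcard' : ∀ c : ℝ, c = 0 ∨ c = 1 →
          (Y.filter fun i => Function.update x a c i ≠ 0 ∧ Function.update x a c i ≠ 1).card
            ≤ n := by
        intro c hc
        rw [hfilter c hc, Finset.card_erase_of_mem ha]
        omega
      have IH0 := ih (Function.update x a 0) hx0 (hcard' 0 (Or.inl rfl))
      have IH1 := ih (Function.update x a 1) hx1 (hcard' 1 (Or.inr rfl))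
      -- rewrite IH0
      have link0 : ∀ t ∈ Set.Icc (0:ℝ) 1,
          (fun i => if i ∈ Y then (if t < Function.update x a 0 i then (1:ℝ) else 0)
            else Function.update x a 0 i) = Function.update (v t) a 0 := by
        intro t ht
        funext i
        by_cases hia : i = a
        · subst hia
          rw [Function.update_self, if_pos haY, Function.update_self,
            if_neg (not_lt.2 ht.1)]
        · rw [Function.update_of_ne hia, Function.update_of_ne hia, hv_def]
      have E0eq : (∫ t in Set.Icc (0:ℝ) 1,
            mExt f fun i => if i ∈ Y then (if t < Function.update x a 0 i then (1:ℝ) else 0)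
              else Function.update x a 0 i)
          = ∫ t in Set.Icc (0:ℝ) 1, mExt f (Function.update (v t) a 0) :=
        setIntegral_congr_fun measurableSet_Icc fun t ht => congrArg (mExt f) (link0 t ht)
      have E0le : (∫ t in Set.Icc (0:ℝ) 1, mExt f (Function.update (v t) a 0))
          ≤ mExt f (Function.update x a 0) := by
        rw [← E0eq]; exact IH0
      -- rewrite IH1
      have link1 : ∀ t ∈ Set.Ico (0:ℝ) 1,
          (fun i => if i ∈ Y then (if t < Function.update x a 1 i then (1:ℝ) else 0)
            else Function.update x a 1 i) = Function.update (v t) a 1 := by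
        intro t ht
        funext i
        by_cases hia : i = a
        · subst hia
          rw [Function.update_self, if_pos haY, Function.update_self, if_pos ht.2]
        · rw [Function.update_of_ne hia, Function.update_of_ne hia, hv_def]
      have E1eq : (∫ t in Set.Icc (0:ℝ) 1, mExt f (Function.update (v t) a 1))
          = (∫ t in Set.Icc (0:ℝ) 1, mExt f (Function.update (v t) a 0))
            + ∫ t in Set.Icc (0:ℝ) 1, m t := by
        rw [← integral_add I0 Im]
        refine integral_congr_ae (Filter.Eventually.of_forall fun t => ?_)
        rw [hm_def]; ring
      have E1eq2 : (∫ t in Set.Icc (0:ℝ) 1,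
            mExt f fun i => if i ∈ Y then (if t < Function.update x a 1 i then (1:ℝ) else 0)
              else Function.update x a 1 i)
          = ∫ t in Set.Icc (0:ℝ) 1, mExt f (Function.update (v t) a 1) := by
        calc (∫ t in Set.Icc (0:ℝ) 1,
            mExt f fun i => if i ∈ Y then (if t < Function.update x a 1 i then (1:ℝ) else 0)
              else Function.update x a 1 i)
            = ∫ t in Set.Ico (0:ℝ) 1,
                mExt f fun i => if i ∈ Y then (if t < Function.update x a 1 i then (1:ℝ) else 0)
                  else Function.update x a 1 i := (setIntegral_congr_set Ico_ae_eq_Icc).symm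
          _ = ∫ t in Set.Ico (0:ℝ) 1, mExt f (Function.update (v t) a 1) :=
              setIntegral_congr_fun measurableSet_Ico fun t ht => congrArg (mExt f) (link1 t ht)
          _ = ∫ t in Set.Icc (0:ℝ) 1, mExt f (Function.update (v t) a 1) :=
              setIntegral_congr_set Ico_ae_eq_Icc
      have E1le : (∫ t in Set.Icc (0:ℝ) 1, mExt f (Function.update (v t) a 0))
            + (∫ t in Set.Icc (0:ℝ) 1, m t)
          ≤ mExt f (Function.update x a 1) := by
        rw [← E1eq, ← E1eq2]; exact IH1
      -- Chebyshev step
      have hsub1 : Set.Ico (0:ℝ) s ⊆ Set.Icc (0:ℝ) 1 :=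
        fun t ht => ⟨ht.1, le_of_lt (lt_of_lt_of_le ht.2 hs1.le)⟩
      have hsub2 : Set.Icc s 1 ⊆ Set.Icc (0:ℝ) 1 :=
        fun t ht => ⟨le_trans hs0.le ht.1, ht.2⟩
      have hdisj2 : Disjoint (Set.Ico (0:ℝ) s) (Set.Icc s 1) :=
        Set.disjoint_left.2 fun t h1 h2 => absurd h2.1 (not_le.2 h1.2)
      have hunion2 : Set.Ico (0:ℝ) s ∪ Set.Icc s 1 = Set.Icc (0:ℝ) 1 :=
        Set.Ico_union_Icc_eq_Icc hs0.le hs1.le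
      have split_if : (∫ t in Set.Icc (0:ℝ) 1, (if t < s then m t else 0))
          = (∫ t in Set.Ico (0:ℝ) s, (if t < s then m t else 0))
            + ∫ t in Set.Icc s 1, (if t < s then m t else 0) := by
        rw [← hunion2, setIntegral_union hdisj2 measurableSet_Icc
          (Iif.mono_set hsub1) (Iif.mono_set hsub2)]
      have split_m : (∫ t in Set.Icc (0:ℝ) 1, m t)
          = (∫ t in Set.Ico (0:ℝ) s, m t) + ∫ t in Set.Icc s 1, m t := by
        rw [← hunion2, setIntegral_union hdisj2 measurableSet_Icc
          (Im.mono_set hsub1) (Im.mono_set hsub2)]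
      have A_eq : (∫ t in Set.Ico (0:ℝ) s, (if t < s then m t else 0))
          = ∫ t in Set.Ico (0:ℝ) s, m t :=
        setIntegral_congr_fun measurableSet_Ico fun t ht => if_pos ht.2
      have Z_eq : (∫ t in Set.Icc s 1, (if t < s then m t else 0)) = 0 := by
        rw [setIntegral_congr_fun (g := fun _ => (0:ℝ)) measurableSet_Icc
          (fun t ht => if_neg (not_lt.2 ht.1))]
        exact integral_zero _ _
      have hA : (∫ t in Set.Ico (0:ℝ) s, m t) ≤ s * m s := by
        have h1 : (∫ t in Set.Ico (0:ℝ) s, m t) ≤ ∫ _ in Set.Ico (0:ℝ) s, m s :=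
          setIntegral_mono_on (Im.mono_set hsub1)
            (integrableOn_const measure_Ico_lt_top.ne) measurableSet_Ico
            (fun t ht => hmono ht.2.le)
        rwa [setIntegral_const, Real.volume_real_Ico_of_le hs0.le, smul_eq_mul, sub_zero] at h1
      have hB : (1 - s) * m s ≤ ∫ t in Set.Icc s 1, m t := by
        have h1 : (∫ _ in Set.Icc s 1, m s) ≤ ∫ t in Set.Icc s 1, m t :=
          setIntegral_mono_on (integrableOn_const measure_Icc_lt_top.ne)
            (Im.mono_set hsub2) measurableSet_Icc (fun t ht => hmono ht.1)
        rwa [setIntegral_const, Real.volume_real_Icc_of_le hs1.le, smul_eq_mul] at h1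
      have cheb : (∫ t in Set.Icc (0:ℝ) 1, (if t < s then m t else 0))
          ≤ s * ∫ t in Set.Icc (0:ℝ) 1, m t := by
        rw [split_if, A_eq, Z_eq, add_zero, split_m]
        have h2 : (1 - s) * (∫ t in Set.Ico (0:ℝ) s, m t) ≤ (1 - s) * (s * m s) :=
          mul_le_mul_of_nonneg_left hA (by linarith)
        have h3 : s * ((1 - s) * m s) ≤ s * ∫ t in Set.Icc s 1, m t :=
          mul_le_mul_of_nonneg_left hB hs0.le
        nlinarith [h2, h3]
      -- combine
      have hdecomp : mExt f x = (1 - s) * mExt f (Function.update x a 0)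
          + s * mExt f (Function.update x a 1) := mExt_decomp f x a
      have hc1 : (1 - s) * (∫ t in Set.Icc (0:ℝ) 1, mExt f (Function.update (v t) a 0))
          ≤ (1 - s) * mExt f (Function.update x a 0) :=
        mul_le_mul_of_nonneg_left E0le (by linarith)
      have hc2 : s * ((∫ t in Set.Icc (0:ℝ) 1, mExt f (Function.update (v t) a 0))
            + ∫ t in Set.Icc (0:ℝ) 1, m t)
          ≤ s * mExt f (Function.update x a 1) :=
        mul_le_mul_of_nonneg_left E1le hs0.le
      nlinarith [hsplit, cheb, hc1, hc2]

lemma key_lemma {f : Finset X → ℝ} (hf : Submodular f) (Y : Finset X) {x : X → ℝ}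
    (hx : ∀ i, x i ∈ Set.Icc (0:ℝ) 1) :
    ∫ t in Set.Icc (0:ℝ) 1,
        mExt f (fun i => if i ∈ Y then (if t < x i then (1:ℝ) else 0) else x i)
      ≤ mExt f x :=
  key_aux hf Y _ x hx le_rfl


end Aux

open Finset Function in
/-- Two-threshold lemma: for a partition `X = X₁ ∪ X₂` and independent uniform thresholds
`λ₁, λ₂ ∈ [0,1]`, the multilinear extension dominates the expected value of `f` on
`(T_{>λ₁}(x) ∩ X₁) ∪ (T_{>λ₂}(x) ∩ X₂)`. -/
theorem two_threshold_lemma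
    {X : Type*} [Fintype X] [DecidableEq X] (f : Finset X → ℝ)
    (hf0 : ∀ S, 0 ≤ f S) (hf : Submodular f)
    (X₁ X₂ : Finset X) (hunion : X₁ ∪ X₂ = Finset.univ) (hdisj : Disjoint X₁ X₂)
    (x : X → ℝ) (hx : ∀ i, x i ∈ Set.Icc (0 : ℝ) 1) :
    (∫ t₁ in Set.Icc (0 : ℝ) 1, ∫ t₂ in Set.Icc (0 : ℝ) 1,
        f (((Finset.univ.filter fun i => t₁ < x i) ∩ X₁) ∪
           ((Finset.univ.filter fun i => t₂ < x i) ∩ X₂))) ≤ mExt f x := by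
  classical
  set z : ℝ → X → ℝ :=
    fun t₁ i => if i ∈ X₁ then (if t₁ < x i then (1:ℝ) else 0) else x i with hz_def
  have hz01 : ∀ t₁ i, z t₁ i ∈ Set.Icc (0:ℝ) 1 := by
    intro t₁ i
    by_cases hi : i ∈ X₁
    · by_cases ht : t₁ < x i <;> simp [hz_def, hi, ht]
    · simpa [hz_def, hi] using hx i
  have inner_le : ∀ t₁ : ℝ,
      (∫ t₂ in Set.Icc (0:ℝ) 1,
        f (((Finset.univ.filter fun i => t₁ < x i) ∩ X₁) ∪
           ((Finset.univ.filter fun i => t₂ < x i) ∩ X₂))) ≤ mExt f (z t₁) := by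
    intro t₁
    have hrw : ∀ t₂ : ℝ,
        f (((Finset.univ.filter fun i => t₁ < x i) ∩ X₁) ∪
           ((Finset.univ.filter fun i => t₂ < x i) ∩ X₂))
        = mExt f (fun i => if i ∈ X₂ then (if t₂ < z t₁ i then (1:ℝ) else 0) else z t₁ i) := by
      intro t₂
      rw [← mExt_vertex f (((Finset.univ.filter fun i => t₁ < x i) ∩ X₁) ∪
           ((Finset.univ.filter fun i => t₂ < x i) ∩ X₂))]
      congr 1
      funext i
      by_cases hi2 : i ∈ X₂
      · have hi1 : i ∉ X₁ := fun h => (Finset.disjoint_left.1 hdisj h) hi2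
        have hzi : z t₁ i = x i := by rw [hz_def]; exact if_neg hi1
        rw [if_pos hi2, hzi]
        by_cases ht : t₂ < x i <;>
          simp [Finset.mem_union, Finset.mem_inter, Finset.mem_filter, hi1, hi2, ht]
      · have hi1 : i ∈ X₁ := by
          have hu := Finset.mem_univ i
          rw [← hunion] at hu
          rcases Finset.mem_union.1 hu with h | h
          · exact h
          · exact absurd h hi2
        rw [if_neg hi2, hz_def]
        by_cases ht : t₁ < x i <;>
          simp [Finset.mem_union, Finset.mem_inter, Finset.mem_filter, hi1, hi2, ht]
    calc (∫ t₂ in Set.Icc (0:ℝ) 1,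
          f (((Finset.univ.filter fun i => t₁ < x i) ∩ X₁) ∪
             ((Finset.univ.filter fun i => t₂ < x i) ∩ X₂)))
        = ∫ t₂ in Set.Icc (0:ℝ) 1,
            mExt f (fun i => if i ∈ X₂ then (if t₂ < z t₁ i then (1:ℝ) else 0) else z t₁ i) :=
          integral_congr_ae (Filter.Eventually.of_forall fun t₂ => hrw t₂)
      _ ≤ mExt f (z t₁) := key_lemma hf X₂ (hz01 t₁)
  have outer1 : (∫ t₁ in Set.Icc (0 : ℝ) 1, ∫ t₂ in Set.Icc (0 : ℝ) 1,
        f (((Finset.univ.filter fun i => t₁ < x i) ∩ X₁) ∪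
           ((Finset.univ.filter fun i => t₂ < x i) ∩ X₂)))
      ≤ ∫ t₁ in Set.Icc (0:ℝ) 1, mExt f (z t₁) := by
    refine setIntegral_mono_on ?_ ?_ measurableSet_Icc (fun t₁ _ => inner_le t₁)
    · exact step_integrableOn (fun S => ∫ t₂ in Set.Icc (0:ℝ) 1,
        f ((S ∩ X₁) ∪ ((Finset.univ.filter fun i => t₂ < x i) ∩ X₂))) x
    · have hrep : (fun t₁ => mExt f (z t₁))
          = fun t₁ => (fun S => mExt f
              (fun i => if i ∈ X₁ then (if i ∈ S then (1:ℝ) else 0) else x i))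
              (Finset.univ.filter fun i => t₁ < x i) := by
        funext t₁
        refine congrArg (mExt f) (funext fun i => ?_)
        by_cases hi : i ∈ X₁ <;> simp [hz_def, hi]
      rw [hrep]
      exact step_integrableOn (fun S => mExt f
        (fun i => if i ∈ X₁ then (if i ∈ S then (1:ℝ) else 0) else x i)) x
  have outer2 : (∫ t₁ in Set.Icc (0:ℝ) 1, mExt f (z t₁)) ≤ mExt f x :=
    key_lemma hf X₁ hx
  linarith [outer1, outer2]
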